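/- arXiv:1411.6692 — 3 statements merged into one kernel-verified Lean document; each statement's English description precedes it below -/
import Mathlib

section
/- Let L be a split δ Jordan-Lie algebra with symmetric root system Λ. The connection relation ~ on Λ, defined by α ~ β if and only if there exists a connection from α to β, is an equivalence relation. -/
/-- A δ Jordan-Lie algebra: a vector space with a bilinear bracket satisfying
`[x,y] = -δ[y,x]` and `[x,[y,z]] = δ[[x,y],z] + δ[y,[x,z]]` with `δ = ±1`. -/
structure DeltaJordanLie (K L : Type*) [Field K] [AddCommGroup L] [Module K L] where
  br : L →ₗ[K] L →ₗ[K] L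
  delta : K
  delta_pm : delta = 1 ∨ delta = -1
  anti : ∀ x y : L, br x y = -(delta • br y x)
  jacobi : ∀ x y z : L, br x (br y z) = delta • br (br x y) z + delta • br y (br x z)

variable {K L : Type*} [Field K] [AddCommGroup L] [Module K L]

/-- The root space `L_α = {v ∈ L : [h,v] = α(h)v for all h ∈ H}`. -/
def DeltaJordanLie.rootSpace (J : DeltaJordanLie K L) (H : Submodule K L)
    (α : Module.Dual K H) : Submodule K L where
  carrier := {v : L | ∀ h : H, J.br (h : L) v = α h • v}
  zero_mem' := by intro h; simp
  add_mem' := by intro a b ha hb h; simp [ha h, hb h, smul_add]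
  smul_mem' := by intro c a ha h; rw [map_smul, ha h, smul_comm]

/-- The root system `Λ = {α ∈ H* \ {0} : L_α ≠ 0}`. -/
def DeltaJordanLie.roots (J : DeltaJordanLie K L) (H : Submodule K L) :
    Set (Module.Dual K H) :=
  {α | α ≠ 0 ∧ J.rootSpace H α ≠ ⊥}

/-- `H` is a splitting Cartan subalgebra: a maximal abelian subalgebra such that
`L` decomposes as the direct sum of the simultaneous eigenspaces `L_α`, with `L_0 = H`. -/
structure DeltaJordanLie.IsSplitting (J : DeltaJordanLie K L) (H : Submodule K L) : Prop where
  abelian : ∀ x ∈ H, ∀ y ∈ H, J.br x y = 0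
  maximal : ∀ H' : Submodule K L, H ≤ H' →
      (∀ x ∈ H', ∀ y ∈ H', J.br x y = 0) → H' = H
  zero_rootSpace : J.rootSpace H 0 = H
  indep : iSupIndep (fun α : Module.Dual K H => J.rootSpace H α)
  decomp : (⨆ α : Module.Dual K H, J.rootSpace H α) = ⊤

/-- The root system is symmetric. -/
def DeltaJordanLie.SymmetricRoots (J : DeltaJordanLie K L) (H : Submodule K L) : Prop :=
  ∀ α ∈ J.roots H, -α ∈ J.roots H

/-- The δ-twisted partial sums of a sequence of roots:
`s₀ = f 0`, `s_{k+1} = δ • (s_k + f (k+1))`, so that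
`s_k = δ^k f 0 + δ^k f 1 + δ^{k-1} f 2 + ⋯ + δ f k`. -/
def connSum {H : Submodule K L} (d : K) (f : ℕ → Module.Dual K H) : ℕ → Module.Dual K H
  | 0 => f 0
  | k + 1 => d • (connSum d f k + f (k + 1))

/-- `f 0, …, f n` is a connection from `α` to `β`: all terms are roots, `f 0 = α`,
all proper δ-twisted partial sums are roots, and the final sum is `±β`. -/
def IsConnection (J : DeltaJordanLie K L) (H : Submodule K L)
    (α β : Module.Dual K H) (n : ℕ) (f : ℕ → Module.Dual K H) : Prop :=
  (∀ i ≤ n, f i ∈ J.roots H) ∧ f 0 = α ∧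
  (∀ k < n, connSum J.delta f k ∈ J.roots H) ∧
  (connSum J.delta f n = β ∨ connSum J.delta f n = -β)

/-- `α` and `β` are connected. -/
def Connected (J : DeltaJordanLie K L) (H : Submodule K L)
    (α β : Module.Dual K H) : Prop :=
  ∃ n f, IsConnection J H α β n f

/-- `Λ_α`: the set of nonzero roots connected to `α`. -/
def connectedRoots (J : DeltaJordanLie K L) (H : Submodule K L)
    (α : Module.Dual K H) : Set (Module.Dual K H) :=
  {β ∈ J.roots H | Connected J H α β}

/-- An ideal of a δ Jordan-Lie algebra: a submodule with `[I,L] ⊆ I` and `[L,I] ⊆ I`. -/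
def IsIdeal (J : DeltaJordanLie K L) (I : Submodule K L) : Prop :=
  ∀ x ∈ I, ∀ y : L, J.br x y ∈ I ∧ J.br y x ∈ I

/-- `H_S = span{[L_β, L_{-β}] : β ∈ S}`. -/
def rootSpan (J : DeltaJordanLie K L) (H : Submodule K L)
    (S : Set (Module.Dual K H)) : Submodule K L :=
  Submodule.span K {z : L | ∃ β ∈ S, ∃ x ∈ J.rootSpace H β, ∃ y ∈ J.rootSpace H (-β),
    z = J.br x y}

/-- `L_S = H_S ⊕ V_S`, the subalgebra associated to a set of roots `S`. -/
def decIdeal (J : DeltaJordanLie K L) (H : Submodule K L)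
    (S : Set (Module.Dual K H)) : Submodule K L :=
  rootSpan J H S ⊔ ⨆ β ∈ S, J.rootSpace H β

section AuxConn

variable (J : DeltaJordanLie K L) (H : Submodule K L)

lemma connSum_zero {H : Submodule K L} (d : K) (f : ℕ → Module.Dual K H) :
    connSum d f 0 = f 0 := rfl

lemma connSum_succ {H : Submodule K L} (d : K) (f : ℕ → Module.Dual K H) (k : ℕ) :
    connSum d f (k + 1) = d • (connSum d f k + f (k + 1)) := rfl

lemma sign_smul_root (hsym : J.SymmetricRoots H) {ε : K} (hε : ε = 1 ∨ ε = -1)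
    {β : Module.Dual K H} (hβ : β ∈ J.roots H) : ε • β ∈ J.roots H := by
  rcases hε with rfl | rfl
  · simpa using hβ
  · have e : (-1 : K) • β = -β := by module
    rw [e]; exact hsym β hβ

lemma connSum_congr {H : Submodule K L} (d : K) (f g : ℕ → Module.Dual K H) (k : ℕ)
    (h : ∀ i ≤ k, f i = g i) : connSum d f k = connSum d g k := by
  induction k with
  | zero => simpa [connSum] using h 0 le_rfl
  | succ k ih =>
    rw [connSum_succ, connSum_succ,
      ih (fun i hi => h i (hi.trans (Nat.le_succ k))), h (k+1) le_rfl]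

lemma smul_helper {H : Submodule K L} (d e : K) (hd2 : d * d = 1)
    (x y : Module.Dual K H) :
    d • (e • (d • (x + y)) + (-(d * e)) • y) = e • x := by
  match_scalars
  · linear_combination e * hd2
  · ring

lemma connected_symm (hsym : J.SymmetricRoots H) {α β : Module.Dual K H}
    (hβ : β ∈ J.roots H) (h : Connected J H α β) : Connected J H β α := by
  obtain ⟨n, f, hroots, hf0, hmid, hfin⟩ := h
  obtain ⟨ε, hε, hsn⟩ : ∃ ε : K, (ε = 1 ∨ ε = -1) ∧ connSum J.delta f n = ε • β := by
    rcases hfin with h | h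
    · exact ⟨1, Or.inl rfl, by simpa using h⟩
    · exact ⟨-1, Or.inr rfl, by rw [h]; module⟩
  set d := J.delta with hd_def
  have hd : d = 1 ∨ d = -1 := J.delta_pm
  have hd2 : d * d = 1 := by rcases hd with h|h <;> rw [h] <;> norm_num
  have hε2 : ε * ε = 1 := by rcases hε with h|h <;> rw [h] <;> norm_num
  set g : ℕ → Module.Dual K H :=
    fun i => if i = 0 then β else (-(d*ε)) • f (n - (i-1)) with hg_def
  have hsgn : -(d*ε) = 1 ∨ -(d*ε) = -1 := by
    rcases hd with h|h <;> rcases hε with h'|h' <;> rw [h, h'] <;> norm_num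
  have key : ∀ k, k ≤ n → connSum d g k = ε • connSum d f (n - k) := by
    intro k
    induction k with
    | zero =>
      intro _
      rw [Nat.sub_zero, connSum_zero, hsn, smul_smul, hε2, one_smul]
      simp [hg_def]
    | succ k ih =>
      intro hk
      have hk' : k ≤ n := le_of_lt hk
      have hnk : n - k = (n - (k+1)) + 1 := by omega
      have hgk1 : g (k+1) = (-(d*ε)) • f (n - k) := by simp [hg_def]
      have hs' : connSum d f (n - k) =
          d • (connSum d f (n - (k+1)) + f (n - k)) := by
        conv_lhs => rw [hnk, connSum_succ, ← hnk]
      rw [connSum_succ, ih hk', hgk1, hs', smul_helper d ε hd2]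
  refine ⟨n, g, ?_, by simp [hg_def], ?_, ?_⟩
  · intro i _
    match i with
    | 0 => simpa [hg_def] using hβ
    | j+1 =>
      have : g (j+1) = (-(d*ε)) • f (n - j) := by simp [hg_def]
      rw [this]
      exact sign_smul_root J H hsym hsgn (hroots _ (Nat.sub_le n j))
  · intro k hk
    rw [key k (le_of_lt hk)]
    rcases Nat.eq_zero_or_pos k with rfl | hkpos
    · rw [Nat.sub_zero, hsn]
      exact sign_smul_root J H hsym hε (sign_smul_root J H hsym hε hβ)
    · exact sign_smul_root J H hsym hε (hmid _ (by omega))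
  · rw [key n le_rfl, Nat.sub_self, connSum_zero, hf0]
    rcases hε with rfl | rfl
    · left; module
    · right; module

lemma connected_trans (hsym : J.SymmetricRoots H) {α β γ : Module.Dual K H}
    (hβ : β ∈ J.roots H) (h1 : Connected J H α β) (h2 : Connected J H β γ) :
    Connected J H α γ := by
  obtain ⟨n, f, hroots1, hf0, hmid1, hfin1⟩ := h1
  obtain ⟨m, g, hroots2, hg0, hmid2, hfin2⟩ := h2
  obtain ⟨ε, hε, hsn⟩ : ∃ ε : K, (ε = 1 ∨ ε = -1) ∧ connSum J.delta f n = ε • β := by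
    rcases hfin1 with h | h
    · exact ⟨1, Or.inl rfl, by simpa using h⟩
    · exact ⟨-1, Or.inr rfl, by rw [h]; module⟩
  set d := J.delta with hd_def
  set h : ℕ → Module.Dual K H :=
    fun i => if i ≤ n then f i else ε • g (i - n) with hh_def
  have key1 : ∀ k ≤ n, connSum d h k = connSum d f k := by
    intro k hk
    exact connSum_congr d h f k (fun i hi => by simp [hh_def, hi.trans hk])
  have key2 : ∀ k, connSum d h (n + k) = ε • connSum d g k := by
    intro k
    induction k with
    | zero => rw [Nat.add_zero, key1 n le_rfl, hsn, connSum_zero, hg0]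
    | succ k ih =>
      have hnk : n + (k+1) = (n + k) + 1 := by omega
      have hh1 : h (n+k+1) = ε • g (k+1) := by
        have h1 : ¬ (n+k+1 ≤ n) := by omega
        have h2 : n+k+1 - n = k+1 := by omega
        simp [hh_def, h1, h2]
      rw [hnk, connSum_succ, ih, hh1, connSum_succ]
      module
  refine ⟨n + m, h, ?_, ?_, ?_, ?_⟩
  · intro i hi
    by_cases hin : i ≤ n
    · simpa [hh_def, hin] using hroots1 i hin
    · have : h i = ε • g (i - n) := by simp [hh_def, hin]
      rw [this]
      exact sign_smul_root J H hsym hε (hroots2 _ (by omega))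
  · have : h 0 = f 0 := by simp [hh_def]
    rw [this, hf0]
  · intro k hk
    by_cases hkn : k < n
    · rw [key1 k (le_of_lt hkn)]; exact hmid1 k hkn
    · by_cases hkeq : k = n
      · subst hkeq
        rw [key1 k le_rfl, hsn]
        exact sign_smul_root J H hsym hε hβ
      · have hk' : k = n + (k - n) := by omega
        rw [hk', key2 (k - n)]
        exact sign_smul_root J H hsym hε (hmid2 _ (by omega))
  · rw [key2 m]
    rcases hε with rfl | rfl <;> rcases hfin2 with h' | h' <;> rw [h']
    · left; module
    · right; module
    · right; module
    · left; module

end AuxConn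

/-- the connection relation is an equivalence relation on `Λ`. -/
theorem stmt3 (J : DeltaJordanLie K L) (H : Submodule K L) (hs : J.IsSplitting H)
    (hsym : J.SymmetricRoots H) :
    Equivalence (fun a b : {γ : Module.Dual K H // γ ∈ J.roots H} =>
      Connected J H a.1 b.1) := by
  constructor
  · intro a
    exact ⟨0, fun _ => a.1, fun i _ => a.2, rfl,
      fun k hk => absurd hk (Nat.not_lt_zero k), Or.inl rfl⟩
  · intro a b hab
    exact connected_symm J H hsym b.2 hab
  · intro a b c hab hbc
    exact connected_trans J H hsym b.2 hab hbc
end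

section
/- Let L be a split δ Jordan-Lie algebra over a field of characteristic 0, I an ideal of L, and x = h₀ + Σ_{j=1}^m e_{β_j} ∈ I with h₀ ∈ H, e_{β_j} ∈ L_{β_j}, and β_j ≠ β_k for j ≠ k. Then each component e_{β_j} belongs to I. -/
variable {K L : Type*} [Field K] [AddCommGroup L] [Module K L]

/-- if `x = h₀ + Σ_j e_{β_j} ∈ I` with `h₀ ∈ H`, `e_{β_j} ∈ L_{β_j}` and
the `β_j` pairwise distinct, then each `e_{β_j} ∈ I`. -/
theorem stmt12 [CharZero K] (J : DeltaJordanLie K L) (H : Submodule K L)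
    (hs : J.IsSplitting H) (I : Submodule K L) (hI : IsIdeal J I)
    (m : ℕ) (β : Fin m → Module.Dual K H) (hβroot : ∀ j, β j ∈ J.roots H)
    (hβinj : Function.Injective β)
    (h₀ : L) (hh₀ : h₀ ∈ H) (e : Fin m → L) (he : ∀ j, e j ∈ J.rootSpace H (β j))
    (hx : h₀ + ∑ j, e j ∈ I) :
    ∀ j, e j ∈ I := by
  classical
  intro j
  obtain ⟨hβj0, -⟩ := hβroot j
  have hyj : ∃ y : H, β j y ≠ 0 := by
    by_contra hcon
    push_neg at hcon
    exact hβj0 (LinearMap.ext fun y => hcon y)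
  obtain ⟨yj, hyj⟩ := hyj
  have hyk : ∀ k : Fin m, k ≠ j → ∃ y : H, β j y ≠ β k y := by
    intro k hk
    by_contra hcon
    push_neg at hcon
    exact hk (hβinj (LinearMap.ext fun y => (hcon y).symm))
  choose y hy using hyk
  have hbr_e : ∀ (k : Fin m) (z : H), J.br (z : L) (e k) = β k z • e k := fun k z => he k z
  have main : ∀ S : Finset (Fin m), j ∉ S →
      ∃ (a : K) (f : Fin m → K), f j ≠ 0 ∧ (∀ k ∈ S, f k = 0) ∧
        a • h₀ + ∑ k, f k • e k ∈ I := by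
    intro S
    induction S using Finset.induction_on with
    | empty =>
      intro _
      exact ⟨1, fun _ => 1, one_ne_zero, by simp, by simpa using hx⟩
    | @insert k S hkS ih =>
      intro hj
      have hkj : k ≠ j := fun h => hj (h ▸ Finset.mem_insert_self k S)
      have hjS : j ∉ S := fun h => hj (Finset.mem_insert_of_mem h)
      obtain ⟨a, f, hfj, hf0, hmem⟩ := ih hjS
      set z : H := y k hkj with hz
      set c : K := β k z with hc
      refine ⟨a * (0 - c), fun k' => f k' * (β k' z - c), ?_, ?_, ?_⟩
      · simp only [Ne, mul_eq_zero, not_or]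
        exact ⟨hfj, sub_ne_zero.mpr (hy k hkj)⟩
      · intro k' hk'
        rcases Finset.mem_insert.mp hk' with h | h
        · subst h; simp [hc]
        · simp [hf0 k' h]
      · have hw : (a * (0 - c)) • h₀ + ∑ k', (f k' * (β k' z - c)) • e k'
            = J.br (z : L) (a • h₀ + ∑ k', f k' • e k')
              - c • (a • h₀ + ∑ k', f k' • e k') := by
          have h1 : J.br (z : L) h₀ = 0 := hs.abelian _ z.2 _ hh₀
          simp only [map_add, map_smul, map_sum, h1, smul_zero, hbr_e, smul_add,
            Finset.smul_sum, smul_smul]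
          have hcoef : a * (0 - c) = -(c * a) := by ring
          have hterm : ∀ k' : Fin m, (f k' * (β k' z - c)) • e k'
              = (f k' * β k' z) • e k' - (c * f k') • e k' := fun k' => by
            rw [← sub_smul]; congr 1; ring
          rw [hcoef, neg_smul]
          simp only [hterm]
          rw [Finset.sum_sub_distrib, zero_add]
          abel
        rw [hw]
        exact sub_mem (hI _ hmem (z : L)).2 (Submodule.smul_mem I c hmem)
  obtain ⟨a, f, hfj, hf0, hmem⟩ := main (Finset.univ.erase j) (Finset.notMem_erase j _)
  have hsum : (∑ k, f k • e k) = f j • e j := by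
    refine Finset.sum_eq_single j (fun k _ hk => ?_) (by simp)
    rw [hf0 k (Finset.mem_erase.mpr ⟨hk, Finset.mem_univ k⟩), zero_smul]
  rw [hsum] at hmem
  have hfin : J.br (yj : L) (a • h₀ + f j • e j) = (f j * β j yj) • e j := by
    rw [map_add, map_smul, map_smul, hs.abelian _ yj.2 _ hh₀, smul_zero, zero_add,
      hbr_e j yj, smul_smul]
  have hmem2 : (f j * β j yj) • e j ∈ I := by
    rw [← hfin]; exact (hI _ hmem (yj : L)).2
  have hne : f j * β j yj ≠ 0 := mul_ne_zero hfj hyj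
  have := Submodule.smul_mem I (f j * β j yj)⁻¹ hmem2
  rwa [inv_smul_smul₀ hne] at this
end

section
/- Let L be a split δ Jordan-Lie algebra with symmetric root system Λ, and let Λ₀ ⊆ Λ be a root subsystem. Then L_{Λ₀} := H_{Λ₀} ⊕ V_{Λ₀}, where H_{Λ₀} = span{[L_α, L_{-α}] : α ∈ Λ₀} and V_{Λ₀} = ⊕_{α∈Λ₀} L_α, is a subalgebra of L (i.e., closed under the bracket). -/
variable {K L : Type*} [Field K] [AddCommGroup L] [Module K L]

lemma root_bracket (J : DeltaJordanLie K L) (H : Submodule K L)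
    (α β : Module.Dual K H) {x y : L}
    (hx : x ∈ J.rootSpace H α) (hy : y ∈ J.rootSpace H β) :
    J.br x y ∈ J.rootSpace H (J.delta • (α + β)) := by
  intro h
  rw [J.jacobi, hx h, hy h, map_smul]
  simp only [LinearMap.smul_apply, LinearMap.add_apply, map_smul, smul_smul, smul_eq_mul]
  rw [← add_smul]
  ring_nf

lemma delta_ne_zero (J : DeltaJordanLie K L) : J.delta ≠ 0 := by
  rcases J.delta_pm with h | h <;> rw [h]
  · exact one_ne_zero
  · exact neg_ne_zero.mpr one_ne_zero

lemma rootSpan_le (J : DeltaJordanLie K L) (H : Submodule K L) (hs : J.IsSplitting H)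
    (S : Set (Module.Dual K H)) : rootSpan J H S ≤ H := by
  rw [rootSpan, Submodule.span_le]
  rintro z ⟨β, -, x, hx, y, hy, rfl⟩
  have h := root_bracket J H β (-β) hx hy
  rw [add_neg_cancel, smul_zero, hs.zero_rootSpace] at h
  exact h

/-- for a root subsystem `Λ₀`, `L_{Λ₀} = H_{Λ₀} ⊕ V_{Λ₀}` is closed
under the bracket, i.e. it is a subalgebra of `L`. -/
theorem stmt16 (J : DeltaJordanLie K L) (H : Submodule K L) (hs : J.IsSplitting H)
    (hsym : J.SymmetricRoots H) (Λ₀ : Set (Module.Dual K H))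
    (hsub : Λ₀ ⊆ J.roots H)
    (h₀sym : ∀ α ∈ Λ₀, -α ∈ Λ₀)
    (h₀closed : ∀ α ∈ Λ₀, ∀ β ∈ Λ₀, J.delta • (α + β) ∈ J.roots H →
      J.delta • (α + β) ∈ Λ₀) :
    ∀ x ∈ decIdeal J H Λ₀, ∀ y ∈ decIdeal J H Λ₀, J.br x y ∈ decIdeal J H Λ₀ := by
  set D := decIdeal J H Λ₀ with hD
  have hHspan : rootSpan J H Λ₀ ≤ H := rootSpan_le J H hs Λ₀
  have hVle : ∀ β ∈ Λ₀, J.rootSpace H β ≤ D := fun β hβ =>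
    le_trans (le_iSup₂ (f := fun β (_ : β ∈ Λ₀) => J.rootSpace H β) β hβ) le_sup_right
  -- key: bracket of two root vectors with roots in Λ₀ lies in D
  have key : ∀ α ∈ Λ₀, ∀ β ∈ Λ₀, ∀ x ∈ J.rootSpace H α, ∀ y ∈ J.rootSpace H β,
      J.br x y ∈ D := by
    intro α hα β hβ x hx y hy
    by_cases hz : α + β = 0
    · have hβeq : β = -α := by linear_combination (norm := abel) hz
      rw [hβeq] at hy
      exact Submodule.mem_sup_left (Submodule.subset_span ⟨α, hα, x, hx, y, hy, rfl⟩)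
    · have hb := root_bracket J H α β hx hy
      by_cases hr : J.delta • (α + β) ∈ J.roots H
      · exact hVle _ (h₀closed α hα β hβ hr) hb
      · have hne : J.delta • (α + β) ≠ 0 := smul_ne_zero (delta_ne_zero J) hz
        have hbot : J.rootSpace H (J.delta • (α + β)) = ⊥ := by
          by_contra h; exact hr ⟨hne, h⟩
        rw [hbot, Submodule.mem_bot] at hb
        rw [hb]; exact D.zero_mem
  -- bracket of an H-element with a root vector in Λ₀ lies in D
  have keyH : ∀ x ∈ H, ∀ β ∈ Λ₀, ∀ y ∈ J.rootSpace H β, J.br x y ∈ D := by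
    intro x hx β hβ y hy
    rw [hy ⟨x, hx⟩]
    exact hVle β hβ (Submodule.smul_mem _ _ hy)
  intro x hx
  have h1 : D ≤ D.comap (J.br x) := by
    have hx' : x ∈ rootSpan J H Λ₀ ⊔ ⨆ β ∈ Λ₀, J.rootSpace H β := hx
    rcases (Submodule.mem_sup).mp hx' with ⟨a, ha, b, hb, rfl⟩
    have hcomA : D ≤ D.comap (J.br a) := by
      have haH : a ∈ H := hHspan ha
      apply sup_le
      · intro y hy
        have : J.br a y = 0 := hs.abelian a haH y (hHspan hy)
        simp only [Submodule.mem_comap, this]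
        exact D.zero_mem
      · refine iSup₂_le fun β hβ y hy => ?_
        exact keyH a haH β hβ y hy
    have hcomB : D ≤ D.comap (J.br b) := by
      -- b ∈ ⨆ β ∈ Λ₀, rootSpace β : use iSup induction
      refine Submodule.iSup_induction
        (motive := fun b => D ≤ Submodule.comap (J.br b) D)
        (fun β : Module.Dual K H => ⨆ _ : β ∈ Λ₀, J.rootSpace H β) hb ?_ ?_ ?_
      · intro β v hv
        by_cases hβ : β ∈ Λ₀
        case neg =>
          have hv0 : v = 0 := by simpa [hβ] using hv
          subst hv0
          intro y hy
          simp only [Submodule.mem_comap, map_zero, LinearMap.zero_apply]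
          exact D.zero_mem
        have hv' : v ∈ J.rootSpace H β := by simpa [hβ] using hv
        apply sup_le
        · intro y hy
          have hyH : y ∈ H := hHspan hy
          have : J.br v y = -(J.delta • (β ⟨y, hyH⟩ • v)) := by
            rw [J.anti v y, hv' ⟨y, hyH⟩]
          simp only [Submodule.mem_comap, this]
          exact D.neg_mem (D.smul_mem _ (D.smul_mem _ (hVle β hβ hv')))
        · refine iSup₂_le fun γ hγ y hy => ?_
          exact key β hβ γ hγ v hv' y hy
      · intro y hy
        simp only [Submodule.mem_comap, map_zero, LinearMap.zero_apply]
        exact D.zero_mem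
      · intro u v hu hv y hy
        simp only [Submodule.mem_comap, map_add, LinearMap.add_apply]
        exact D.add_mem (hu hy) (hv hy)
    intro y hy
    simp only [Submodule.mem_comap, map_add, LinearMap.add_apply]
    exact D.add_mem (hcomA hy) (hcomB hy)
  exact fun y hy => h1 hy
end
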